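/- Let A, B, C be a triangle, F, D, E the midpoints of sides BC, CA, AB respectively, and G the circumcenter of triangle FDE. If G lies on the internal bisector of angle ACB (G ≠ C, ∠ACG = ∠GCB, and ∠ACG + ∠GCB = ∠ACB), then dist A C = dist B C or ∠ACB = π/3. -/

import Mathlib

open EuclideanGeometry Real

theorem stmt_17 (A B C F D E G : EuclideanSpace ℝ (Fin 2))
    (hABC : ¬ Collinear ℝ ({A, B, C} : Set (EuclideanSpace ℝ (Fin 2))))
    (hF : F = midpoint ℝ B C) (hD : D = midpoint ℝ C A) (hE : E = midpoint ℝ A B)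
    (hG₁ : dist G F = dist G D) (hG₂ : dist G D = dist G E)
    (hGC : G ≠ C) (h1 : ∠ A C G = ∠ G C B) (h2 : ∠ A C G + ∠ G C B = ∠ A C B) :
    dist A C = dist B C ∨ ∠ A C B = π / 3 := by
  -- basic nondegeneracy
  have hAC : A ≠ C := by
    rintro rfl
    exact hABC (by
      apply Collinear.subset (s₂ := {A, B}) _ (collinear_pair ℝ A B)
      intro x hx
      simp only [Set.mem_insert_iff, Set.mem_singleton_iff] at hx ⊢
      tauto)
  have hBC : B ≠ C := by
    rintro rfl
    exact hABC (by
      apply Collinear.subset (s₂ := {A, B}) _ (collinear_pair ℝ A B)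
      intro x hx
      simp only [Set.mem_insert_iff, Set.mem_singleton_iff] at hx ⊢
      tauto)
  set u : EuclideanSpace ℝ (Fin 2) := A - C with hu
  set v : EuclideanSpace ℝ (Fin 2) := B - C with hv
  set w : EuclideanSpace ℝ (Fin 2) := G - C with hw
  have hune : u ≠ 0 := sub_ne_zero.mpr hAC
  have hvne : v ≠ 0 := sub_ne_zero.mpr hBC
  have hwne : w ≠ 0 := sub_ne_zero.mpr hGC
  have ha : ‖u‖ ≠ 0 := norm_ne_zero_iff.mpr hune
  have hb : ‖v‖ ≠ 0 := norm_ne_zero_iff.mpr hvne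
  have hww : ‖w‖ ≠ 0 := norm_ne_zero_iff.mpr hwne
  have hhalf : ‖(1/2 : ℝ)‖ = (1/2 : ℝ) := by norm_num
  have huF : G - F = (G - C) - (1/2 : ℝ) • (B - C) := by
    rw [hF, midpoint_eq_smul_add, show (⅟2 : ℝ) = 1/2 by norm_num]; module
  have huD : G - D = (G - C) - (1/2 : ℝ) • (A - C) := by
    rw [hD, midpoint_eq_smul_add, show (⅟2 : ℝ) = 1/2 by norm_num]; module
  have huE : G - E = (G - C) - (1/2 : ℝ) • ((A - C) + (B - C)) := by
    rw [hE, midpoint_eq_smul_add, show (⅟2 : ℝ) = 1/2 by norm_num]; module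
  rw [← hv, ← hw] at huF
  rw [← hu, ← hw] at huD
  rw [← hu, ← hv, ← hw] at huE
  clear_value u v w
  -- circumcenter equations
  have key1 : ‖w - (1/2 : ℝ) • v‖ = ‖w - (1/2 : ℝ) • u‖ := by
    rw [dist_eq_norm, dist_eq_norm, huF, huD] at hG₁
    exact hG₁
  have key2 : ‖w - (1/2 : ℝ) • u‖ = ‖w - (1/2 : ℝ) • (u + v)‖ := by
    rw [dist_eq_norm, dist_eq_norm, huD, huE] at hG₂
    exact hG₂
  have e1 : (inner ℝ w u : ℝ) - inner ℝ w v = (‖u‖^2 - ‖v‖^2)/4 := by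
    have sq1 : ‖w - (1/2 : ℝ) • v‖^2 = ‖w - (1/2 : ℝ) • u‖^2 := by rw [key1]
    rw [norm_sub_sq_real, norm_sub_sq_real, real_inner_smul_right, real_inner_smul_right,
      norm_smul, norm_smul, hhalf] at sq1
    linear_combination sq1
  have e2 : (inner ℝ w v : ℝ) = (‖v‖^2 + 2 * inner ℝ u v)/4 := by
    have sq2 : ‖w - (1/2 : ℝ) • u‖^2 = ‖w - (1/2 : ℝ) • (u + v)‖^2 := by rw [key2]
    rw [norm_sub_sq_real, norm_sub_sq_real, real_inner_smul_right, real_inner_smul_right,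
      norm_smul, norm_smul, hhalf, inner_add_right] at sq2
    have hnadd : ‖u + v‖^2 = ‖u‖^2 + 2 * inner ℝ u v + ‖v‖^2 := norm_add_sq_real u v
    linear_combination sq2 + (1/4) * hnadd
  -- angle equation
  have hangA : ∠ A C G = InnerProductGeometry.angle u w := by
    rw [EuclideanGeometry.angle]; norm_num [vsub_eq_sub, hu, hw]
  have hangB : ∠ G C B = InnerProductGeometry.angle w v := by
    rw [EuclideanGeometry.angle]; norm_num [vsub_eq_sub, hv, hw]
  have e3 : ‖v‖ * (inner ℝ w u : ℝ) = ‖u‖ * inner ℝ w v := by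
    have hcos := congrArg Real.cos h1
    rw [hangA, hangB, InnerProductGeometry.cos_angle, InnerProductGeometry.cos_angle] at hcos
    have ha' : (0:ℝ) < ‖u‖ := lt_of_le_of_ne (norm_nonneg u) (Ne.symm ha)
    have hb' : (0:ℝ) < ‖v‖ := lt_of_le_of_ne (norm_nonneg v) (Ne.symm hb)
    have hw' : (0:ℝ) < ‖w‖ := lt_of_le_of_ne (norm_nonneg w) (Ne.symm hww)
    rw [div_eq_div_iff (by positivity) (by positivity)] at hcos
    have huw : (inner ℝ w u : ℝ) = inner ℝ u w := real_inner_comm u w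
    have := mul_left_cancel₀ hww (show ‖w‖ * (‖v‖ * (inner ℝ w u : ℝ)) = ‖w‖ * (‖u‖ * inner ℝ w v) by
      linear_combination hcos + ‖w‖ * ‖v‖ * huw)
    exact this
  -- conclude
  by_cases hab : ‖u‖ = ‖v‖
  · left
    rw [dist_eq_norm, dist_eq_norm, ← hu, ← hv]
    exact hab
  · right
    have hq : (inner ℝ w v : ℝ) = ‖v‖ * (‖u‖ + ‖v‖) / 4 := by
      have hne : ‖u‖ - ‖v‖ ≠ 0 := sub_ne_zero.mpr hab
      have key : (‖u‖ - ‖v‖) * (inner ℝ w v : ℝ) = (‖u‖ - ‖v‖) * (‖v‖ * (‖u‖ + ‖v‖) / 4) := by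
        linear_combination ‖v‖ * e1 - e3
      exact mul_left_cancel₀ hne key
    have hr : (inner ℝ u v : ℝ) = ‖u‖ * ‖v‖ / 2 := by
      linear_combination 2 * hq - 2 * e2
    have hACB : ∠ A C B = InnerProductGeometry.angle u v := by
      rw [EuclideanGeometry.angle]; norm_num [vsub_eq_sub, hu, hv]
    rw [hACB, InnerProductGeometry.angle, hr]
    rw [show ‖u‖ * ‖v‖ / 2 / (‖u‖ * ‖v‖) = 1/2 by field_simp]
    rw [show (1/2:ℝ) = Real.cos (π/3) by rw [Real.cos_pi_div_three]]
    exact Real.arccos_cos (by positivity) (by linarith [Real.pi_pos])
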